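/- Let m and n be positive integers with m dividing n, and set k := n/m. Then C(n,2)·C(m,2) + Σ_{1≤i<j≤m} (k·(j−i))² − n·Σ_{1≤i<j≤m} k·(j−i) = n·(m−1)·(2mn − 3m − n)/12. (This is the simplification of the bipartite cylindrical crossing number formula for K_{n,m} in the case m | n, using that ⌊(n/m)(j−1)⌋ − ⌊(n/m)(i−1)⌋ = k(j−i) when m divides n.) -/
import Mathlib

open Finset in
private lemma sum_id_q (m : ℕ) : ∑ i ∈ Icc 1 m, (i : ℚ) = m * (m + 1) / 2 := by
  induction m with
  | zero => simp
  | succ m ih =>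
    rw [Finset.sum_Icc_succ_top (by omega)]
    push_cast
    rw [ih]; ring

open Finset in
private lemma sum_sq_q (m : ℕ) : ∑ i ∈ Icc 1 m, (i : ℚ) ^ 2 = m * (m + 1) * (2 * m + 1) / 6 := by
  induction m with
  | zero => simp
  | succ m ih =>
    rw [Finset.sum_Icc_succ_top (by omega)]
    push_cast
    rw [ih]; ring

open Finset in
private lemma S1 (m : ℕ) :
    ∑ i ∈ Icc 1 m, ∑ j ∈ Ioc i m, ((j : ℚ) - i) = m * (m ^ 2 - 1) / 6 := by
  induction m with
  | zero => simp
  | succ m ih =>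
    rw [Finset.sum_Icc_succ_top (by omega)]
    have h1 : ∀ i ∈ Icc 1 m, ∑ j ∈ Ioc i (m + 1), ((j : ℚ) - i)
        = (∑ j ∈ Ioc i m, ((j : ℚ) - i)) + ((m + 1 : ℚ) - i) := by
      intro i hi
      simp only [Finset.mem_Icc] at hi
      rw [Finset.sum_Ioc_succ_top (by omega)]
      push_cast; ring
    rw [Finset.sum_congr rfl h1, Finset.sum_add_distrib, ih,
      Finset.sum_sub_distrib, sum_id_q]
    simp only [Finset.sum_const, Nat.card_Icc, Finset.Ioc_self, Finset.sum_empty]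
    push_cast
    ring

open Finset in
private lemma S2 (m : ℕ) :
    ∑ i ∈ Icc 1 m, ∑ j ∈ Ioc i m, ((j : ℚ) - i) ^ 2 = m ^ 2 * (m ^ 2 - 1) / 12 := by
  induction m with
  | zero => simp
  | succ m ih =>
    rw [Finset.sum_Icc_succ_top (by omega)]
    have h1 : ∀ i ∈ Icc 1 m, ∑ j ∈ Ioc i (m + 1), ((j : ℚ) - i) ^ 2
        = (∑ j ∈ Ioc i m, ((j : ℚ) - i) ^ 2)
          + ((m + 1 : ℚ) ^ 2 - 2 * (m + 1) * i + (i : ℚ) ^ 2) := by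
      intro i hi
      simp only [Finset.mem_Icc] at hi
      rw [Finset.sum_Ioc_succ_top (by omega)]
      push_cast; ring
    rw [Finset.sum_congr rfl h1, Finset.sum_add_distrib, ih]
    rw [show ∀ S : Finset ℕ, ∑ i ∈ S, ((m + 1 : ℚ) ^ 2 - 2 * (m + 1) * i + (i : ℚ) ^ 2)
        = ∑ i ∈ S, (m + 1 : ℚ) ^ 2 - 2 * (m + 1) * (∑ i ∈ S, (i : ℚ))
          + ∑ i ∈ S, (i : ℚ) ^ 2 from fun S => by
        simp [Finset.sum_add_distrib, Finset.sum_sub_distrib, Finset.mul_sum]]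
    rw [sum_id_q, sum_sq_q]
    simp only [Finset.sum_const, Nat.card_Icc, Finset.Ioc_self, Finset.sum_empty,
      Nat.add_sub_cancel]
    push_cast
    ring

theorem stmt_19 (m n : ℕ) (hm : 0 < m) (hn : 0 < n) (hdvd : m ∣ n)
    (k : ℕ) (hk : k = n / m) :
    ((n.choose 2 : ℚ)) * (m.choose 2)
      + (∑ i ∈ Finset.Icc 1 m, ∑ j ∈ Finset.Ioc i m, ((k : ℚ) * ((j : ℚ) - i)) ^ 2)
      - (n : ℚ) * (∑ i ∈ Finset.Icc 1 m, ∑ j ∈ Finset.Ioc i m, (k : ℚ) * ((j : ℚ) - i)) =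
    (n : ℚ) * ((m : ℚ) - 1) * (2 * m * n - 3 * m - n) / 12 := by
  have hnk : n = m * k := by
    subst hk
    exact (Nat.mul_div_cancel' hdvd).symm
  have e1 : ∑ i ∈ Finset.Icc 1 m, ∑ j ∈ Finset.Ioc i m, ((k : ℚ) * ((j : ℚ) - i)) ^ 2
      = (k : ℚ) ^ 2 * (m ^ 2 * (m ^ 2 - 1) / 12) := by
    rw [← S2 m, Finset.mul_sum]
    exact Finset.sum_congr rfl fun i _ => by rw [Finset.mul_sum]; exact Finset.sum_congr rfl fun j _ => by ring
  have e2 : ∑ i ∈ Finset.Icc 1 m, ∑ j ∈ Finset.Ioc i m, (k : ℚ) * ((j : ℚ) - i)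
      = (k : ℚ) * (m * (m ^ 2 - 1) / 6) := by
    rw [← S1 m, Finset.mul_sum]
    exact Finset.sum_congr rfl fun i _ => by rw [Finset.mul_sum]
  rw [e1, e2, Nat.cast_choose_two, Nat.cast_choose_two, hnk]
  push_cast
  ring
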